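/- Let M be a compact metric space, e : ℕ → M an injective map with dense range, P a Borel probability measure on M, and g : M → ℝ continuous; suppose v(n) = g(e(n)) has continuous ν-distribution function F. Then for every Borel set S ⊆ ℝ, P(g⁻¹(S)) = λ_F(S), i.e. the pushforward measure of P under g equals the Lebesgue–Stieltjes measure associated with F. -/

import Mathlib

open MeasureTheory Set

/-- Let `g : M → ℝ` be continuous and suppose `v(n) = g(e(n))` has a continuous
`ν`-distribution function `F` (a nondecreasing continuous function, here packaged
as a Stieltjes function). Then for every Borel set `S ⊆ ℝ` we have
`P(g⁻¹(S)) = λ_F(S)`, the Lebesgue–Stieltjes measure of `S`. -/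
theorem stmt7 {M : Type*} [MetricSpace M] [CompactSpace M]
    [MeasurableSpace M] [BorelSpace M]
    (P : Measure M) [IsProbabilityMeasure P]
    (e : ℕ → M) (he : Function.Injective e) (hd : DenseRange e)
    (g : M → ℝ) (hg : Continuous g)
    (F : StieltjesFunction ℝ) (hFcont : Continuous F)
    (hF : ∀ x : ℝ,
      P (closure (e '' {n : ℕ | g (e n) < x})) +
          P (closure (e '' {n : ℕ | g (e n) < x}ᶜ)) = 1 ∧
        (P (closure (e '' {n : ℕ | g (e n) < x}))).toReal = F x) :
    ∀ S : Set ℝ, MeasurableSet S → P (g ⁻¹' S) = F.measure S := by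
  -- the closure of the relevant image has measure `F x`
  have hcl : ∀ x : ℝ, P (closure (e '' {n : ℕ | g (e n) < x})) = ENNReal.ofReal (F x) := by
    intro x
    rw [← (hF x).2, ENNReal.ofReal_toReal (measure_ne_top P _)]
  have hF0 : ∀ x : ℝ, 0 ≤ F x := fun x => (hF x).2 ▸ ENNReal.toReal_nonneg
  -- the closure is squeezed between preimages
  have hsub1 : ∀ x : ℝ, g ⁻¹' Iio x ⊆ closure (e '' {n : ℕ | g (e n) < x}) := by
    intro x
    have hU : IsOpen (g ⁻¹' Iio x) := isOpen_Iio.preimage hg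
    have := hd.open_subset_closure_inter hU
    refine this.trans (closure_mono ?_)
    rintro y ⟨hy, ⟨n, rfl⟩⟩
    exact ⟨n, hy, rfl⟩
  have hsub2 : ∀ x : ℝ, closure (e '' {n : ℕ | g (e n) < x}) ⊆ g ⁻¹' Iic x := by
    intro x
    refine closure_minimal ?_ (isClosed_Iic.preimage hg)
    rintro y ⟨n, hn, rfl⟩
    have hn' : g (e n) < x := hn
    exact hn'.le
  -- the distribution of P ∘ g⁻¹ on left-rays
  have hIio : ∀ x : ℝ, P (g ⁻¹' Iio x) = ENNReal.ofReal (F x) := by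
    intro x
    refine le_antisymm (le_trans (measure_mono (hsub1 x)) (hcl x).le) ?_
    refine ENNReal.ofReal_le_of_le_toReal ?_
    have htend : Filter.Tendsto F (nhdsWithin x (Iio x)) (nhds (F x)) :=
      (hFcont.tendsto x).mono_left nhdsWithin_le_nhds
    refine le_of_tendsto htend ?_
    filter_upwards [eventually_mem_nhdsWithin] with y (hy : y < x)
    have h1 : closure (e '' {n : ℕ | g (e n) < y}) ⊆ g ⁻¹' Iio x :=
      (hsub2 y).trans (fun z hz => show g z < x from lt_of_le_of_lt hz hy)
    have : P (closure (e '' {n : ℕ | g (e n) < y})) ≤ P (g ⁻¹' Iio x) := measure_mono h1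
    rw [hcl y] at this
    calc F y = (ENNReal.ofReal (F y)).toReal := by
            rw [ENNReal.toReal_ofReal (hF0 y)]
      _ ≤ (P (g ⁻¹' Iio x)).toReal :=
          ENNReal.toReal_mono (measure_ne_top P _) this
  have hIic : ∀ x : ℝ, P (g ⁻¹' Iic x) = ENNReal.ofReal (F x) := by
    intro x
    refine le_antisymm ?_ (by rw [← hIio x]; exact measure_mono (preimage_mono Iio_subset_Iic_self))
    have hle : (P (g ⁻¹' Iic x)).toReal ≤ F x := by
      have htend : Filter.Tendsto F (nhdsWithin x (Ioi x)) (nhds (F x)) :=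
        (hFcont.tendsto x).mono_left nhdsWithin_le_nhds
      refine ge_of_tendsto htend ?_
      filter_upwards [eventually_mem_nhdsWithin] with y (hy : x < y)
      have h1 : g ⁻¹' Iic x ⊆ g ⁻¹' Iio y := preimage_mono (Iic_subset_Iio.2 hy)
      have : P (g ⁻¹' Iic x) ≤ P (g ⁻¹' Iio y) := measure_mono h1
      rw [hIio y] at this
      calc (P (g ⁻¹' Iic x)).toReal ≤ (ENNReal.ofReal (F y)).toReal :=
            ENNReal.toReal_mono ENNReal.ofReal_ne_top this
        _ = F y := ENNReal.toReal_ofReal (hF0 y)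
    calc P (g ⁻¹' Iic x) = ENNReal.ofReal ((P (g ⁻¹' Iic x)).toReal) := by
          rw [ENNReal.ofReal_toReal (measure_ne_top P _)]
      _ ≤ ENNReal.ofReal (F x) := ENNReal.ofReal_le_ofReal hle
  -- identify the pushforward with the Stieltjes measure
  have hmap : P.map g = F.measure := by
    have : IsProbabilityMeasure (P.map g) :=
      Measure.isProbabilityMeasure_map hg.measurable.aemeasurable
    refine Measure.ext_of_Ioc (P.map g) F.measure (fun a b hab => ?_)
    rw [Measure.map_apply hg.measurable measurableSet_Ioc, F.measure_Ioc]
    have : g ⁻¹' Ioc a b = g ⁻¹' Iic b \ g ⁻¹' Iic a := by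
      rw [← Set.Iic_sdiff_Iic, Set.preimage_diff]
    rw [this, measure_diff (preimage_mono (Iic_subset_Iic.2 hab.le))
      (measurableSet_Iic.preimage hg.measurable).nullMeasurableSet (measure_ne_top P _),
      hIic, hIic, ← ENNReal.ofReal_sub _ (hF0 a)]
  intro S hS
  rw [← hmap, Measure.map_apply hg.measurable hS]
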